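/- Bordered Hankel determinant formula: let T, S be linear functionals on polynomials with moments c_i = T(x^i), d_i = S(x^i), and let Γ_n be the determinant of the (n+1)×(n+1) matrix whose first n rows are (c_{i+j})_{0≤i≤n-1,0≤j≤n} and whose last row is (d_0, ..., d_n). If the Hankel determinants Δ_k of T are nonzero, then Γ_n/Δ_n = S(P_n)/T(x^n P_n), where P_n is the monic orthogonal polynomial of degree n for T. -/

import Mathlib

open Polynomial

/-- Determinant of an `(n+1)×(n+1)` matrix whose last column is the last standard basis
vector equals the determinant of the top-left `n×n` block. -/
lemma det_last_col_single {K : Type*} [Field K] {n : ℕ}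
    (M : Matrix (Fin (n + 1)) (Fin (n + 1)) K)
    (h : ∀ i, M i (Fin.last n) = (Pi.single (Fin.last n) (1 : K) : Fin (n+1) → K) i) :
    M.det = Matrix.det (fun i j : Fin n => M i.castSucc j.castSucc) := by
  rw [← Matrix.det_submatrix_equiv_self finSumFinEquiv M]
  have hM : M.submatrix finSumFinEquiv finSumFinEquiv =
      Matrix.fromBlocks (Matrix.of fun i j : Fin n => M i.castSucc j.castSucc) 0
        (Matrix.of fun (_ : Fin 1) (j : Fin n) => M (Fin.last n) j.castSucc) 1 := by
    ext i j
    have hcast : ∀ i : Fin n, finSumFinEquiv (Sum.inl i : Fin n ⊕ Fin 1) = i.castSucc := by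
      intro i; rfl
    have hlast : ∀ j : Fin 1, finSumFinEquiv (Sum.inr j : Fin n ⊕ Fin 1) = Fin.last n := by
      intro j
      have : j = 0 := Subsingleton.elim _ _
      subst this
      ext
      simp [finSumFinEquiv]
    rcases i with i | i <;> rcases j with j | j <;>
      simp only [Matrix.submatrix_apply, hcast, hlast, Matrix.fromBlocks_apply₁₁,
        Matrix.fromBlocks_apply₁₂, Matrix.fromBlocks_apply₂₁, Matrix.fromBlocks_apply₂₂,
        Matrix.of_apply, Matrix.zero_apply]
    · rw [h i.castSucc, Pi.single_eq_of_ne (Fin.castSucc_lt_last i).ne]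
    · rw [h (Fin.last n), Pi.single_eq_same]
      have : i = j := Subsingleton.elim _ _
      subst this
      rw [Matrix.one_apply_eq]
  rw [hM, Matrix.det_fromBlocks_zero₁₂, Matrix.det_one, mul_one]
  rfl

/-- Replacing the last column of `M` by `M.mulVec v` with `v` ending in `1` does not
change the determinant. -/
lemma det_updateColumn_mulVec_last {K : Type*} [Field K] {n : ℕ}
    (M : Matrix (Fin (n + 1)) (Fin (n + 1)) K) (v : Fin (n + 1) → K)
    (hv : v (Fin.last n) = 1) :
    (M.updateCol (Fin.last n) (M.mulVec v)).det = M.det := by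
  have hE : (Matrix.updateCol (1 : Matrix (Fin (n + 1)) (Fin (n + 1)) K)
      (Fin.last n) v).det = 1 := by
    rw [← Matrix.cramer_apply, Matrix.cramer_one]
    simpa using hv
  have hmul : M * Matrix.updateCol (1 : Matrix (Fin (n + 1)) (Fin (n + 1)) K)
      (Fin.last n) v = M.updateCol (Fin.last n) (M.mulVec v) := by
    ext i k
    by_cases hk : k = Fin.last n
    · subst hk
      simp [Matrix.mul_apply, Matrix.updateCol_apply, Matrix.mulVec, dotProduct]
    · simp [Matrix.mul_apply, Matrix.updateCol_apply, hk, Matrix.one_apply,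
        Finset.sum_ite_eq' Finset.univ k (fun j => M i j)]
  rw [← hmul, Matrix.det_mul, hE, mul_one]

/-- Bordered Hankel determinant formula: `Γₙ/Δₙ = S(Pₙ)/T(xⁿPₙ)`. -/
theorem bordered_hankel_det_formula {K : Type*} [Field K]
    (T S : Polynomial K →ₗ[K] K)
    (hΔ : ∀ m : ℕ,
      Matrix.det (fun i j : Fin (m + 1) => T (X ^ ((i : ℕ) + (j : ℕ)))) ≠ 0)
    (n : ℕ) (hn : 1 ≤ n) (P : Polynomial K)
    (hmonic : P.Monic) (hdeg : P.natDegree = n)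
    (horth : ∀ Q : Polynomial K, Q.degree < n → T (P * Q) = 0) :
    Matrix.det (fun i j : Fin (n + 1) =>
        if (i : ℕ) < n then T (X ^ ((i : ℕ) + (j : ℕ))) else S (X ^ (j : ℕ))) /
      Matrix.det (fun i j : Fin (n + 1) => T (X ^ ((i : ℕ) + (j : ℕ)))) =
      S P / T (X ^ n * P) := by
  obtain ⟨m, rfl⟩ : ∃ m, n = m + 1 := ⟨n - 1, (Nat.succ_pred_eq_of_pos hn).symm⟩
  set v : Fin (m + 2) → K := fun j => P.coeff j with hvdef
  have hv : v (Fin.last (m + 1)) = 1 := by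
    have := hmonic.coeff_natDegree
    rw [hdeg] at this
    simpa [hvdef, Fin.last] using this
  -- key summation identity
  have key : ∀ (L : Polynomial K →ₗ[K] K) (i : ℕ),
      (∑ j : Fin (m + 2), L (X ^ (i + (j : ℕ))) * v j) = L (X ^ i * P) := by
    intro L i
    have hP : P = ∑ j ∈ Finset.range (m + 2), monomial j (P.coeff j) :=
      P.as_sum_range' (m + 2) (by omega)
    conv_rhs => rw [hP]
    rw [Finset.mul_sum, map_sum, Fin.sum_univ_eq_sum_range
      (fun j => L (X ^ (i + j)) * P.coeff j)]
    refine Finset.sum_congr rfl fun j _ => ?_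
    have : (X : K[X]) ^ i * monomial j (P.coeff j) = P.coeff j • X ^ (i + j) := by
      rw [← C_mul_X_pow_eq_monomial, smul_eq_C_mul, pow_add]
      ring
    rw [this, map_smul, smul_eq_mul, mul_comm]
  set A : Matrix (Fin (m + 2)) (Fin (m + 2)) K :=
    fun i j => T (X ^ ((i : ℕ) + (j : ℕ))) with hAdef
  set B : Matrix (Fin (m + 2)) (Fin (m + 2)) K :=
    fun i j => if (i : ℕ) < m + 1 then T (X ^ ((i : ℕ) + (j : ℕ))) else S (X ^ (j : ℕ))
    with hBdef
  have hlastval : ∀ i : Fin (m + 2), ¬ (i : ℕ) < m + 1 → i = Fin.last (m + 1) := by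
    intro i hi
    ext
    simp only [Fin.val_last]
    omega
  have horth' : ∀ i : Fin (m + 2), (i : ℕ) < m + 1 → T (X ^ (i : ℕ) * P) = 0 := by
    intro i hi
    rw [mul_comm]
    apply horth
    calc ((X : K[X]) ^ (i : ℕ)).degree ≤ (i : ℕ) := degree_X_pow_le _
      _ < ((m + 1 : ℕ) : WithBot ℕ) := by exact_mod_cast hi
  have hAv : A.mulVec v = Pi.single (Fin.last (m + 1)) (T (X ^ (m + 1) * P)) := by
    funext i
    by_cases hi : (i : ℕ) < m + 1
    · have hne : i ≠ Fin.last (m + 1) := by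
        intro h; rw [h] at hi; simp at hi
      rw [Pi.single_eq_of_ne hne]
      simpa [Matrix.mulVec, dotProduct, hAdef, key T (i : ℕ)] using horth' i hi
    · have : i = Fin.last (m + 1) := hlastval i hi
      subst this
      rw [Pi.single_eq_same]
      simpa [Matrix.mulVec, dotProduct, hAdef] using key T (m + 1)
  have hBv : B.mulVec v = Pi.single (Fin.last (m + 1)) (S P) := by
    funext i
    by_cases hi : (i : ℕ) < m + 1
    · have hne : i ≠ Fin.last (m + 1) := by
        intro h; rw [h] at hi; simp at hi
      rw [Pi.single_eq_of_ne hne]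
      simpa [Matrix.mulVec, dotProduct, hBdef, hi, Nat.lt_succ_iff.mp hi, key T (i : ℕ)] using horth' i hi
    · have hil : i = Fin.last (m + 1) := hlastval i hi
      subst hil
      rw [Pi.single_eq_same]
      have := key S 0
      simp only [pow_zero, one_mul, zero_add] at this
      simpa [Matrix.mulVec, dotProduct, hBdef] using this
  -- generic computation of the determinant after the column operation
  have main : ∀ (M : Matrix (Fin (m + 2)) (Fin (m + 2)) K) (c : K),
      M.mulVec v = Pi.single (Fin.last (m + 1)) c →
      M.det = c * Matrix.det (fun i j : Fin (m + 1) => M i.castSucc j.castSucc) := by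
    intro M c hMv
    rw [← det_updateColumn_mulVec_last M v hv, hMv]
    have hsingle : (Pi.single (Fin.last (m + 1)) c : Fin (m+2) → K) =
        c • (Pi.single (Fin.last (m + 1)) (1 : K) : Fin (m+2) → K) := by
      funext i
      by_cases h : i = Fin.last (m + 1)
      · subst h; simp
      · simp [Pi.single_eq_of_ne h]
    rw [hsingle, Matrix.det_updateCol_smul]
    congr 1
    rw [det_last_col_single]
    · congr 1
      funext i j
      rw [Matrix.updateCol_apply, if_neg (Fin.castSucc_lt_last j).ne]
    · intro i
      rw [Matrix.updateCol_apply, if_pos rfl]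
  have hminor : (fun i j : Fin (m + 1) => B i.castSucc j.castSucc) =
      (fun i j : Fin (m + 1) => A i.castSucc j.castSucc) := by
    funext i j
    simp [hAdef, hBdef, (Fin.castSucc_lt_last i), Nat.not_lt.mpr (Nat.lt_succ_iff.mp i.is_lt)]
  have hAdet : A.det = T (X ^ (m + 1) * P) *
      Matrix.det (fun i j : Fin (m + 1) => A i.castSucc j.castSucc) := main A _ hAv
  have hBdet : B.det = S P *
      Matrix.det (fun i j : Fin (m + 1) => A i.castSucc j.castSucc) := by
    rw [main B _ hBv, hminor]
  have hD : Matrix.det (fun i j : Fin (m + 1) => A i.castSucc j.castSucc) ≠ 0 := by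
    have := hΔ m
    convert this using 2
    rfl
  have hAne : A.det ≠ 0 := hΔ (m + 1)
  have ht : T (X ^ (m + 1) * P) ≠ 0 := by
    intro h
    rw [hAdet, h, zero_mul] at hAne
    exact hAne rfl
  show B.det / A.det = S P / T (X ^ (m + 1) * P)
  rw [hAdet, hBdet, mul_div_mul_right _ _ hD]
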